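/- Let (G, ≺) be a UPO-graph whose underlying directed graph G is a progressive graph. Then ≺ satisfies condition (A) if and only if ≺ satisfies condition (U4). -/

import Mathlib

variable {V E : Type}

/-- Edge reachability `e1 → e2`: a directed path of edges `f_0, …, f_k` with `k ≥ 1`,
`f_0 = e1`, `f_k = e2` and `t f_{i-1} = s f_i`. -/
def eReach (s t : E → V) : E → E → Prop :=
  Relation.TransGen (fun a b => t a = s b)

/-- Vertex reachability `v → w`: a directed path from `v` to `w` using at least one edge. -/
def vReach (s t : E → V) : V → V → Prop :=
  Relation.TransGen (fun v w => ∃ e, s e = v ∧ t e = w)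

/-- A directed graph is acyclic if no vertex reaches itself. -/
def Acyclic (s t : E → V) : Prop := ∀ v, ¬ vReach s t v v

/-- `I(v)`: incoming edges of `v`. -/
def inE (t : E → V) (v : V) : Set E := {e | t e = v}

/-- `O(v)`: outgoing edges of `v`. -/
def outE (s : E → V) (v : V) : Set E := {e | s e = v}

/-- Convex hull `X̄` of `X` in the linear order `le`: the interval `{y | X^- ≤ y ≤ X^+}`
(empty when `X` is empty). -/
def hull (le : E → E → Prop) (X : Set E) : Set E :=
  {y | ∃ a ∈ X, ∃ b ∈ X, le a y ∧ le y b}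

/-- The strict order associated to a linear order `le`. -/
def ltOf (le : E → E → Prop) (a b : E) : Prop := le a b ∧ a ≠ b

/-- A source: no incoming edges. -/
def IsSource (t : E → V) (v : V) : Prop := inE t v = ∅

/-- A sink: no outgoing edges. -/
def IsSink (s : E → V) (v : V) : Prop := outE s v = ∅

/-- A progressive graph: acyclic and every source and every sink has degree 1. -/
def Progressive (s t : E → V) : Prop :=
  Acyclic s t ∧
  ∀ v, (IsSource t v ∨ IsSink s v) → ({e | s e = v ∨ t e = v} : Set E).ncard = 1

/-- `I(G)`: input edges, those whose source vertex is a source of `G`. -/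
def inputE (s t : E → V) : Set E := {e | IsSource t (s e)}

/-- `O(G)`: output edges, those whose target vertex is a sink of `G`. -/
def outputE (s t : E → V) : Set E := {e | IsSink s (t e)}

/-- Condition (U1) = (P1): `e1 → e2` implies `e1 ≺ e2`. -/
def U1 (s t : E → V) (le : E → E → Prop) : Prop :=
  ∀ e1 e2, eReach s t e1 e2 → ltOf le e1 e2

/-- Condition (U2): for every vertex `v`, `Ī(v) ∩ Ō(v) = ∅` and `Ē(v) = Ī(v) ∪ Ō(v)`. -/
def U2 (s t : E → V) (le : E → E → Prop) : Prop :=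
  ∀ v, hull le (inE t v) ∩ hull le (outE s v) = ∅ ∧
    hull le (inE t v ∪ outE s v) = hull le (inE t v) ∪ hull le (outE s v)

/-- Condition (U3). -/
def U3 (s t : E → V) (le : E → E → Prop) : Prop :=
  ∀ v1 v2,
    ((inE t v1 ∩ hull le (inE t v2)).Nonempty →
      hull le (inE t v1) ⊆ hull le (inE t v2)) ∧
    ((outE s v1 ∩ hull le (outE s v2)).Nonempty →
      hull le (outE s v1) ⊆ hull le (outE s v2))

/-- Condition (U4): for every progressive vertex `v`, `I(G) ∩ Ō(v) = ∅` and `O(G) ∩ Ī(v) = ∅`. -/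
def U4 (s t : E → V) (le : E → E → Prop) : Prop :=
  ∀ v, ¬ IsSource t v → ¬ IsSink s v →
    inputE s t ∩ hull le (outE s v) = ∅ ∧ outputE s t ∩ hull le (inE t v) = ∅

/-- An upward planar order: a linear order on the edges satisfying (U1), (U2), (U3). -/
def IsUPO (s t : E → V) (le : E → E → Prop) : Prop :=
  IsLinearOrder E le ∧ U1 s t le ∧ U2 s t le ∧ U3 s t le

/-- Condition (P2). -/
def P2 (s t : E → V) (le : E → E → Prop) : Prop :=
  ∀ e1 e2 e3, ltOf le e1 e2 → ltOf le e2 e3 → eReach s t e1 e3 →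
    eReach s t e1 e2 ∨ eReach s t e2 e3

/-- Condition (P̃2). -/
def P2t (s t : E → V) (le : E → E → Prop) : Prop :=
  ∀ e1 e2 e3, ltOf le e1 e2 → ltOf le e2 e3 → t e1 = s e3 →
    eReach s t e1 e2 ∨ eReach s t e2 e3

/-- Condition (P3) (for distinct vertices). -/
def P3 (s t : E → V) (le : E → E → Prop) : Prop :=
  ∀ v1 v2, v1 ≠ v2 →
    ((inE t v1 ∩ hull le (inE t v2)).Nonempty → vReach s t v1 v2) ∧
    ((outE s v1 ∩ hull le (outE s v2)).Nonempty → vReach s t v2 v1)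

/-- Condition (A): for distinct `v1 v2`, `∅ ≠ Ī(v1) ⊆ Ī(v2)` implies `v1 → v2`,
and `∅ ≠ Ō(v1) ⊆ Ō(v2)` implies `v2 → v1`. -/
def CondA (s t : E → V) (le : E → E → Prop) : Prop :=
  ∀ v1 v2, v1 ≠ v2 →
    ((hull le (inE t v1)).Nonempty → hull le (inE t v1) ⊆ hull le (inE t v2) →
      vReach s t v1 v2) ∧
    ((hull le (outE s v1)).Nonempty → hull le (outE s v1) ⊆ hull le (outE s v2) →
      vReach s t v2 v1)

/-- A POP-graph: a progressive graph with a planar order ((P1) and (P2)). -/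
def IsPOP (s t : E → V) (le : E → E → Prop) : Prop :=
  Progressive s t ∧ IsLinearOrder E le ∧ U1 s t le ∧ P2 s t le

/-- `U(v) = {w | Ō(v) ⊊ Ō(w)}` when `O(v) ≠ ∅`, and `U(v) = ∅` otherwise. -/
def Uset (s : E → V) (le : E → E → Prop) (v : V) : Set V :=
  {w | (outE s v).Nonempty ∧ hull le (outE s v) ⊂ hull le (outE s w)}

/-- `D(v) = {w | Ī(v) ⊊ Ī(w)}` when `I(v) ≠ ∅`, and `D(v) = ∅` otherwise. -/
def Dset (t : E → V) (le : E → E → Prop) (v : V) : Set V :=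
  {w | (inE t v).Nonempty ∧ hull le (inE t v) ⊂ hull le (inE t w)}

/-- A CPP-extension of `G = (s, t)`: a POP-graph `(s', t', le')` with an embedding
`(φ0, φ1)` satisfying (E1)–(E4). -/
def IsCPP {V' E' : Type} (s t : E → V) (s' t' : E' → V')
    (le' : E' → E' → Prop) (φ0 : V → V') (φ1 : E → E') : Prop :=
  Function.Injective φ0 ∧ Function.Injective φ1 ∧
  (∀ e, s' (φ1 e) = φ0 (s e)) ∧ (∀ e, t' (φ1 e) = φ0 (t e)) ∧
  IsPOP s' t' le' ∧
  -- (E1)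
  Set.range φ0 = {v : V' | ¬ IsSource t' v ∧ ¬ IsSink s' v} ∧
  -- (E2)
  Nat.card E' = Nat.card E + ({v : V | IsSource t v}).ncard + ({v : V | IsSink s v}).ncard ∧
  -- (E3)
  (∀ v w, IsSource t v → IsSink s w → inE t' (φ0 v) ∩ outE s' (φ0 w) = ∅) ∧
  -- (E4)
  (∀ e' : E', e' ∉ Set.range φ1 → e' ∉ inputE s' t' → e' ∉ outputE s' t' →
    ((∃ a ∈ outE s' (s' e'), ltOf le' a e') ∧ (∃ b ∈ outE s' (s' e'), ltOf le' e' b)) ∨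
    ((∃ a ∈ inE t' (t' e'), ltOf le' a e') ∧ (∃ b ∈ inE t' (t' e'), ltOf le' e' b)))
/-- Auxiliary: build a `LinearOrder` structure from an `IsLinearOrder` fact. -/
noncomputable def linOrderOf (le : E → E → Prop) (h : IsLinearOrder E le) : LinearOrder E :=
  letI := h
  { le := le
    lt := fun a b => le a b ∧ ¬ le b a
    le_refl := fun a => refl_of le a
    le_trans := fun _ _ _ => trans_of le
    lt_iff_le_not_ge := fun _ _ => Iff.rfl
    le_antisymm := fun _ _ => antisymm_of le
    le_total := total_of le
    toDecidableLE := fun _ _ => Classical.dec _ }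

/-- Auxiliary: every nonempty subset of a finite linearly ordered type has a least element. -/
lemma exists_min_rel [Finite E] (le : E → E → Prop) (hlin : IsLinearOrder E le)
    (X : Set E) (hne : X.Nonempty) : ∃ m ∈ X, ∀ x ∈ X, le m x := by
  letI := linOrderOf le hlin
  obtain ⟨m, hm, hmin⟩ := Set.exists_min_image X id (Set.toFinite X) hne
  exact ⟨m, hm, fun x hx => hmin x hx⟩

/-- Auxiliary: if two sets have equal (nonempty) hulls, they intersect. -/
lemma inter_of_hull_eq [Finite E] (le : E → E → Prop) (hlin : IsLinearOrder E le)
    (X Y : Set E) (hne : X.Nonempty) (h : hull le X = hull le Y) : (X ∩ Y).Nonempty := by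
  letI := hlin
  obtain ⟨m, hmX, hmin⟩ := exists_min_rel le hlin X hne
  have hmH : m ∈ hull le Y := h ▸ ⟨m, hmX, m, hmX, refl_of le m, refl_of le m⟩
  obtain ⟨a, haY, b, hbY, ham, _⟩ := hmH
  have haH : a ∈ hull le X := h ▸ ⟨a, haY, a, haY, refl_of le a, refl_of le a⟩
  obtain ⟨a', ha'X, _, _, ha'a, _⟩ := haH
  have hma : le m a := trans_of le (hmin a' ha'X) ha'a
  have : a = m := antisymm_of le ham hma
  exact ⟨m, hmX, this ▸ haY⟩

/-- Auxiliary: in a progressive graph, a source or sink has a unique incident edge. -/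
lemma degree_one_eq (s t : E → V) (hprog : Progressive s t) (v : V)
    (hv : IsSource t v ∨ IsSink s v) (e1 e2 : E)
    (he1 : s e1 = v ∨ t e1 = v) (he2 : s e2 = v ∨ t e2 = v) : e1 = e2 := by
  obtain ⟨a, ha⟩ := Set.ncard_eq_one.mp (hprog.2 v hv)
  have h1' : e1 ∈ ({e | s e = v ∨ t e = v} : Set E) := he1
  have h2' : e2 ∈ ({e | s e = v ∨ t e = v} : Set E) := he2
  rw [ha] at h1' h2'
  exact h1'.trans h2'.symm

/-- Key lemma: in a UPO progressive graph satisfying (U4), an edge lying in the hull of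
`I(v)` (resp. `O(v)`) without belonging to it yields reachability. -/
lemma key_reach [Finite E] (s t : E → V) (le : E → E → Prop)
    (hlin : IsLinearOrder E le) (h1 : U1 s t le) (h2 : U2 s t le) (h3 : U3 s t le)
    (hprog : Progressive s t) (h4 : U4 s t le) :
    ∀ n : ℕ, ∀ (e : E) (v : V),
      (e ∈ hull le (inE t v) → e ∉ inE t v →
        (hull le (inE t v) ∩ {x | le e x}).ncard ≤ n → vReach s t (t e) v) ∧
      (e ∈ hull le (outE s v) → e ∉ outE s v →
        (hull le (outE s v) ∩ {x | le x e}).ncard ≤ n → vReach s t v (s e)) := by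
  letI := hlin
  have hrf : ∀ a : E, le a a := fun a => refl_of le a
  have htr : ∀ {a b c : E}, le a b → le b c → le a c := fun h h' => trans_of le h h'
  have has : ∀ {a b : E}, le a b → le b a → a = b := fun h h' => antisymm_of le h h'
  have hto : ∀ a b : E, le a b ∨ le b a := total_of le
  intro n
  induction n using Nat.strong_induction_on with
  | _ n IH =>
    intro e v
    constructor
    · -- in-hull case
      intro heH heI hcard
      obtain ⟨a0, ha0, b0, hb0, hae, heb⟩ := heH
      have hta0 : t a0 = v := ha0
      have htb0 : t b0 = v := hb0
      have hnev : t e ≠ v := heI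
      have hea0 : a0 ≠ e := fun h => hnev (h ▸ hta0)
      have ha0b0 : a0 ≠ b0 := fun h => hea0 (has hae (h.symm ▸ heb))
      have hvns : ¬ IsSource t v := by
        intro h
        have hmem : a0 ∈ inE t v := ha0
        rw [show inE t v = ∅ from h] at hmem
        exact hmem
      have hvnk : ¬ IsSink s v :=
        fun h => ha0b0 (degree_one_eq s t hprog v (Or.inr h) a0 b0 (Or.inr hta0) (Or.inr htb0))
      have heHv : e ∈ hull le (inE t v) := ⟨a0, ha0, b0, hb0, hae, heb⟩
      have hv1k : ¬ IsSink s (t e) := by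
        intro h
        have hmem : e ∈ outputE s t ∩ hull le (inE t v) := ⟨h, heHv⟩
        rw [(h4 v hvns hvnk).2] at hmem
        exact hmem
      obtain ⟨f, hf⟩ := Set.nonempty_iff_ne_empty.mpr hv1k
      have hsf : s f = t e := hf
      have hef : ltOf le e f := h1 e f (Relation.TransGen.single hsf.symm)
      by_cases htf : t f = v
      · exact Relation.TransGen.single ⟨f, hsf, htf⟩
      · rcases hto f b0 with hfb | hbf
        · -- recurse on f (in-hull)
          have hfH : f ∈ hull le (inE t v) := ⟨a0, ha0, b0, hb0, htr hae hef.1, hfb⟩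
          have hss : hull le (inE t v) ∩ {x | le f x} ⊂ hull le (inE t v) ∩ {x | le e x} := by
            constructor
            · rintro x ⟨hx1, hx2⟩
              exact ⟨hx1, htr hef.1 hx2⟩
            · intro habs
              obtain ⟨_, hfe⟩ := habs ⟨heHv, hrf e⟩
              exact hef.2 (has hef.1 hfe)
          have hlt := Set.ncard_lt_ncard hss (Set.toFinite _)
          have ihf := (IH _ (lt_of_lt_of_le hlt hcard) f v).1 hfH htf le_rfl
          exact Relation.TransGen.head ⟨f, hsf, rfl⟩ ihf
        · -- b0 lies between e and f
          have hb0E : b0 ∈ hull le (inE t (t e) ∪ outE s (t e)) :=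
            ⟨e, Or.inl (show e ∈ inE t (t e) from rfl), f,
              Or.inr (show f ∈ outE s (t e) from hsf), heb, hbf⟩
          rw [(h2 (t e)).2] at hb0E
          rcases hb0E with hin | hout
          · -- equal hulls: contradiction
            have hs1 : hull le (inE t v) ⊆ hull le (inE t (t e)) := (h3 v (t e)).1 ⟨b0, hb0, hin⟩
            have hs2 : hull le (inE t (t e)) ⊆ hull le (inE t v) :=
              (h3 (t e) v).1 ⟨e, rfl, heHv⟩
            obtain ⟨m, hm1, hm2⟩ := inter_of_hull_eq le hlin (inE t (t e)) (inE t v)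
              ⟨e, rfl⟩ (Set.Subset.antisymm hs2 hs1)
            exact absurd ((show t m = t e from hm1).symm.trans (show t m = v from hm2)) hnev
          · by_cases hsb0 : s b0 = t e
            · exact Relation.TransGen.single ⟨b0, hsb0, htb0⟩
            · -- recurse on b0 (out-hull of t e)
              have hss : hull le (outE s (t e)) ∩ {x | le x b0} ⊂
                  hull le (inE t v) ∩ {x | le e x} := by
                constructor
                · rintro x ⟨⟨c, hc, d, hd, hcx, hxd⟩, hxb⟩
                  have hec : ltOf le e c :=
                    h1 e c (Relation.TransGen.single (show t e = s c from (show s c = t e from hc).symm))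
                  have hex : le e x := htr hec.1 hcx
                  exact ⟨⟨a0, ha0, b0, hb0, htr hae hex, hxb⟩, hex⟩
                · intro habs
                  obtain ⟨⟨c, hc, d, hd, hce, _⟩, _⟩ := habs ⟨heHv, hrf e⟩
                  have hec : ltOf le e c :=
                    h1 e c (Relation.TransGen.single (show t e = s c from (show s c = t e from hc).symm))
                  exact hec.2 (has hec.1 hce)
              have hlt := Set.ncard_lt_ncard hss (Set.toFinite _)
              have ihd := (IH _ (lt_of_lt_of_le hlt hcard) b0 (t e)).2 hout hsb0 le_rfl
              exact Relation.TransGen.tail ihd ⟨b0, rfl, htb0⟩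
    · -- out-hull case (mirror)
      intro heH heO hcard
      obtain ⟨c0, hc0, d0, hd0, hce, hed⟩ := heH
      have hsc0 : s c0 = v := hc0
      have hsd0 : s d0 = v := hd0
      have hnev : s e ≠ v := heO
      have hc0e : c0 ≠ e := fun h => hnev (h ▸ hsc0)
      have hc0d0 : c0 ≠ d0 := fun h => hc0e (has hce (h.symm ▸ hed))
      have hvnk : ¬ IsSink s v := by
        intro h
        have hmem : c0 ∈ outE s v := hc0
        rw [show outE s v = ∅ from h] at hmem
        exact hmem
      have hvns : ¬ IsSource t v :=
        fun h => hc0d0 (degree_one_eq s t hprog v (Or.inl h) c0 d0 (Or.inl hsc0) (Or.inl hsd0))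
      have heHv : e ∈ hull le (outE s v) := ⟨c0, hc0, d0, hd0, hce, hed⟩
      have hws : ¬ IsSource t (s e) := by
        intro h
        have hmem : e ∈ inputE s t ∩ hull le (outE s v) := ⟨h, heHv⟩
        rw [(h4 v hvns hvnk).1] at hmem
        exact hmem
      obtain ⟨g, hg⟩ := Set.nonempty_iff_ne_empty.mpr hws
      have htg : t g = s e := hg
      have hge : ltOf le g e := h1 g e (Relation.TransGen.single htg)
      by_cases hsg : s g = v
      · exact Relation.TransGen.single ⟨g, hsg, htg⟩
      · rcases hto c0 g with hcg | hgc
        · -- recurse on g (out-hull)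
          have hgH : g ∈ hull le (outE s v) := ⟨c0, hc0, d0, hd0, hcg, htr hge.1 hed⟩
          have hss : hull le (outE s v) ∩ {x | le x g} ⊂ hull le (outE s v) ∩ {x | le x e} := by
            constructor
            · rintro x ⟨hx1, hx2⟩
              exact ⟨hx1, htr hx2 hge.1⟩
            · intro habs
              obtain ⟨_, hgeg⟩ := habs ⟨heHv, hrf e⟩
              exact hge.2 (has hge.1 hgeg)
          have hlt := Set.ncard_lt_ncard hss (Set.toFinite _)
          have ihg := (IH _ (lt_of_lt_of_le hlt hcard) g v).2 hgH hsg le_rfl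
          exact Relation.TransGen.tail ihg ⟨g, rfl, htg⟩
        · -- c0 lies between g and e
          have hc0E : c0 ∈ hull le (inE t (s e) ∪ outE s (s e)) :=
            ⟨g, Or.inl (show g ∈ inE t (s e) from htg), e,
              Or.inr (show e ∈ outE s (s e) from rfl), hgc, hce⟩
          rw [(h2 (s e)).2] at hc0E
          rcases hc0E with hin | hout
          · by_cases htc0 : t c0 = s e
            · exact Relation.TransGen.single ⟨c0, hsc0, htc0⟩
            · -- recurse on c0 (in-hull of s e)
              have hss : hull le (inE t (s e)) ∩ {x | le c0 x} ⊂
                  hull le (outE s v) ∩ {x | le x e} := by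
                constructor
                · rintro x ⟨⟨a, ha, b, hb, hax, hxb⟩, hcx⟩
                  have hbe : ltOf le b e :=
                    h1 b e (Relation.TransGen.single (show t b = s e from hb))
                  have hxe : le x e := htr hxb hbe.1
                  exact ⟨⟨c0, hc0, d0, hd0, hcx, htr hxe hed⟩, hxe⟩
                · intro habs
                  obtain ⟨⟨a, ha, b, hb, _, heb'⟩, _⟩ := habs ⟨heHv, hrf e⟩
                  have hbe : ltOf le b e :=
                    h1 b e (Relation.TransGen.single (show t b = s e from hb))
                  exact hbe.2 (has hbe.1 heb')
              have hlt := Set.ncard_lt_ncard hss (Set.toFinite _)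
              have ihc := (IH _ (lt_of_lt_of_le hlt hcard) c0 (s e)).1 hin htc0 le_rfl
              exact Relation.TransGen.head ⟨c0, hsc0, rfl⟩ ihc
          · -- equal hulls: contradiction
            have hs1 : hull le (outE s v) ⊆ hull le (outE s (s e)) :=
              (h3 v (s e)).2 ⟨c0, hc0, hout⟩
            have hs2 : hull le (outE s (s e)) ⊆ hull le (outE s v) :=
              (h3 (s e) v).2 ⟨e, rfl, heHv⟩
            obtain ⟨m, hm1, hm2⟩ := inter_of_hull_eq le hlin (outE s (s e)) (outE s v)
              ⟨e, rfl⟩ (Set.Subset.antisymm hs2 hs1)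
            exact absurd ((show s m = s e from hm1).symm.trans (show s m = v from hm2)) hnev

/-- for a UPO-graph on a progressive graph, (A) ↔ (U4). -/
theorem A_iff_U4 {V E : Type} [Fintype V] [Fintype E]
    (s t : E → V) (le : E → E → Prop) (hUPO : IsUPO s t le)
    (hprog : Progressive s t) :
    CondA s t le ↔ U4 s t le := by
  obtain ⟨hlin, h1, h2, h3⟩ := hUPO
  letI := hlin
  have hrf : ∀ a : E, le a a := fun a => refl_of le a
  have has : ∀ {a b : E}, le a b → le b a → a = b := fun h h' => antisymm_of le h h'
  constructor
  · -- (A) → (U4)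
    intro hA v hvs hvk
    constructor
    · apply Set.eq_empty_iff_forall_notMem.mpr
      rintro e ⟨hin, heH⟩
      have hsrc : IsSource t (s e) := hin
      have hsv : s e ≠ v := fun h => hvs (h ▸ hsrc)
      have hsub : hull le (outE s (s e)) ⊆ hull le (outE s v) := by
        rintro y ⟨a, ha, b, hb, hay, hyb⟩
        have ha' : a = e := degree_one_eq s t hprog (s e) (Or.inl hsrc) a e (Or.inl ha) (Or.inl rfl)
        have hb' : b = e := degree_one_eq s t hprog (s e) (Or.inl hsrc) b e (Or.inl hb) (Or.inl rfl)
        have hy : y = e := has (hb' ▸ hyb) (ha' ▸ hay)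
        exact hy ▸ heH
      have hne' : (hull le (outE s (s e))).Nonempty := ⟨e, e, rfl, e, rfl, hrf e, hrf e⟩
      have hreach := (hA (s e) v hsv).2 hne' hsub
      have hlast : ∃ b, ∃ e', s e' = b ∧ t e' = s e := by
        cases hreach with
        | single h => exact ⟨v, h⟩
        | tail _ h => exact ⟨_, h⟩
      obtain ⟨_, e', _, hte'⟩ := hlast
      have hmem : e' ∈ inE t (s e) := hte'
      rw [show inE t (s e) = ∅ from hsrc] at hmem
      exact hmem
    · apply Set.eq_empty_iff_forall_notMem.mpr
      rintro e ⟨hout, heH⟩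
      have hsnk : IsSink s (t e) := hout
      have htv : t e ≠ v := fun h => hvk (h ▸ hsnk)
      have hsub : hull le (inE t (t e)) ⊆ hull le (inE t v) := by
        rintro y ⟨a, ha, b, hb, hay, hyb⟩
        have ha' : a = e := degree_one_eq s t hprog (t e) (Or.inr hsnk) a e (Or.inr ha) (Or.inr rfl)
        have hb' : b = e := degree_one_eq s t hprog (t e) (Or.inr hsnk) b e (Or.inr hb) (Or.inr rfl)
        have hy : y = e := has (hb' ▸ hyb) (ha' ▸ hay)
        exact hy ▸ heH
      have hne' : (hull le (inE t (t e))).Nonempty := ⟨e, e, rfl, e, rfl, hrf e, hrf e⟩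
      have hreach := (hA (t e) v htv).1 hne' hsub
      obtain ⟨b, ⟨e', hse', _⟩, _⟩ := Relation.TransGen.head'_iff.mp hreach
      have hmem : e' ∈ outE s (t e) := hse'
      rw [show outE s (t e) = ∅ from hsnk] at hmem
      exact hmem
  · -- (U4) → (A)
    intro h4 v1 v2 hne
    have key := key_reach s t le hlin h1 h2 h3 hprog h4
    constructor
    · intro hneH hsub
      obtain ⟨y, a, ha, b, hb, _, _⟩ := hneH
      have hta : t a = v1 := ha
      have haH : a ∈ hull le (inE t v2) := hsub ⟨a, ha, a, ha, hrf a, hrf a⟩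
      have hnI : a ∉ inE t v2 := fun h => hne (hta ▸ (show t a = v2 from h))
      have hr := (key _ a v2).1 haH hnI le_rfl
      exact hta ▸ hr
    · intro hneH hsub
      obtain ⟨y, c, hc, d, hd, _, _⟩ := hneH
      have hsc : s c = v1 := hc
      have hcH : c ∈ hull le (outE s v2) := hsub ⟨c, hc, c, hc, hrf c, hrf c⟩
      have hnO : c ∉ outE s v2 := fun h => hne (hsc ▸ (show s c = v2 from h))
      have hr := (key _ c v2).2 hcH hnO le_rfl
      exact hsc ▸ hr
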